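/- There exists a shrinking sequence θ such that the metric space (2^ℕ, d_θ) has Hausdorff dimension 0 and Assouad dimension 1. -/

import Mathlib

open Metric Set
open scoped ENNReal NNReal

noncomputable section

/-- A metric space is doubling if there is `N` such that every closed ball of radius `r`
can be covered by at most `N` closed balls of radius `r / 2`. -/
def IsDoubling (X : Type*) [MetricSpace X] : Prop :=
  ∃ N : ℕ, ∀ (x : X) (r : ℝ), ∃ c : Finset X, c.card ≤ N ∧
    Metric.closedBall x r ⊆ ⋃ y ∈ c, Metric.closedBall y (r / 2)

/-- Every `δ`-chain is trivial (constant). -/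
def IsUniformlyDisconnectedWith (X : Type*) [MetricSpace X] (δ : ℝ) : Prop :=
  ∀ (N : ℕ) (x : ℕ → X),
    (∀ i : ℕ, 1 ≤ i → i ≤ N → dist (x (i - 1)) (x i) ≤ δ * dist (x 0) (x N)) →
    ∀ i ≤ N, x i = x 0

def IsUniformlyDisconnected (X : Type*) [MetricSpace X] : Prop :=
  ∃ δ : ℝ, 0 < δ ∧ δ < 1 ∧ IsUniformlyDisconnectedWith X δ

/-- `ρ`-uniform perfectness. -/
def IsUniformlyPerfectWith (X : Type*) [MetricSpace X] (ρ : ℝ) : Prop :=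
  ∀ (x : X) (r : ℝ), 0 < r → r < Metric.diam (Set.univ : Set X) →
    (Metric.closedBall x r \ Metric.ball x (ρ * r)).Nonempty

def IsUniformlyPerfect (X : Type*) [MetricSpace X] : Prop :=
  ∃ ρ : ℝ, 0 < ρ ∧ ρ ≤ 1 ∧ IsUniformlyPerfectWith X ρ

/-- A metric space has type `(u, v, w) ∈ {0,1}³` (here encoded by `Bool`s) if `u = 1` exactly
when it is doubling, `v = 1` exactly when it is uniformly disconnected, and `w = 1` exactly
when it is uniformly perfect. -/
def HasType (X : Type*) [MetricSpace X] (u v w : Bool) : Prop :=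
  (IsDoubling X ↔ u = true) ∧ (IsUniformlyDisconnected X ↔ v = true) ∧
    (IsUniformlyPerfect X ↔ w = true)

/-- `S_D`: points having no doubling neighborhood. -/
def SD (X : Type*) [MetricSpace X] : Set X :=
  {x : X | ∀ s ∈ nhds x, ¬ IsDoubling ↥s}

/-- `S_UD`: points having no uniformly disconnected neighborhood. -/
def SUD (X : Type*) [MetricSpace X] : Set X :=
  {x : X | ∀ s ∈ nhds x, ¬ IsUniformlyDisconnected ↥s}

/-- `S_UP`: points having no uniformly perfect neighborhood. -/
def SUP (X : Type*) [MetricSpace X] : Set X :=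
  {x : X | ∀ s ∈ nhds x, ¬ IsUniformlyPerfect ↥s}

/-- The ternary correspondence map `T(x) = Σ_{i≥1} 2 x_i / 3^i` (indices shifted to start
at `0`). -/
def cantorT (x : ℕ → Bool) : ℝ :=
  ∑' i : ℕ, 2 * (if x i then (1 : ℝ) else 0) / 3 ^ (i + 1)

/-- A Cantor space: a topological space homeomorphic to the middle-third Cantor set
(`cantorSet` is Mathlib's middle-third Cantor set in `ℝ`). -/
def IsCantorSpace (X : Type*) [TopologicalSpace X] : Prop :=
  Nonempty (X ≃ₜ ↥cantorSet)

/-- The first index at which `x` and `y` differ. -/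
def seqV (x y : ℕ → Bool) : ℕ := sInf {n | x n ≠ y n}

-- The standard ultrametric `e(x,y) = 3^{-(v(x,y)+1)}` on `2^ℕ` (indices starting at `0`,
-- corresponding to `3^{-min{n ≥ 1 : x_n ≠ y_n}}` with indices starting at `1`).
open Classical in
def cantorE (x y : ℕ → Bool) : ℝ :=
  if x = y then 0 else (3 : ℝ)⁻¹ ^ (seqV x y + 1)

/-- A shrinking sequence: positive, non-increasing, converging to `0`. -/
def IsShrinking (α : ℕ → ℝ) : Prop :=
  (∀ n, 0 < α n) ∧ (∀ m n : ℕ, m ≤ n → α n ≤ α m) ∧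
    Filter.Tendsto α Filter.atTop (nhds 0)

-- The distance `d_α(x,y) = α (v(x,y))` associated with a sequence `α`.
open Classical in
def seqDist (α : ℕ → ℝ) (x y : ℕ → Bool) : ℝ :=
  if x = y then 0 else α (seqV x y)

lemma seqV_comm (x y : ℕ → Bool) : seqV x y = seqV y x := by
  unfold seqV
  congr 1
  ext n
  exact ne_comm

lemma seqDist_self (α : ℕ → ℝ) (x : ℕ → Bool) : seqDist α x x = 0 := by
  rw [seqDist, if_pos rfl]

lemma seqDist_of_ne (α : ℕ → ℝ) {x y : ℕ → Bool} (h : x ≠ y) :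
    seqDist α x y = α (seqV x y) := by
  rw [seqDist, if_neg h]

lemma seqDist_nonneg {α : ℕ → ℝ} (hα : ∀ n, 0 < α n) (x y : ℕ → Bool) :
    0 ≤ seqDist α x y := by
  rcases eq_or_ne x y with h | h
  · rw [h, seqDist_self]
  · rw [seqDist_of_ne α h]
    exact (hα _).le

lemma min_seqV_le {x y z : ℕ → Bool} (hxz : x ≠ z) :
    min (seqV x y) (seqV y z) ≤ seqV x z := by
  have hne : {n | x n ≠ z n}.Nonempty := by
    rcases Function.ne_iff.mp hxz with ⟨n, hn⟩
    exact ⟨n, hn⟩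
  have hmem : x (seqV x z) ≠ z (seqV x z) := Nat.sInf_mem hne
  rcases ne_or_eq (x (seqV x z)) (y (seqV x z)) with h | h
  · exact le_trans (min_le_left _ _) (Nat.sInf_le h)
  · have h' : y (seqV x z) ≠ z (seqV x z) := by rw [← h]; exact hmem
    exact le_trans (min_le_right _ _) (Nat.sInf_le h')

/-- The sequentially metrized Cantor space `(2^ℕ, d_α)` for a shrinking sequence `α`. -/
def seqMetricSpace (α : ℕ → ℝ) (hα : IsShrinking α) : MetricSpace (ℕ → Bool) where
  dist := seqDist α
  dist_self x := seqDist_self α x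
  dist_comm x y := by
    show seqDist α x y = seqDist α y x
    rcases eq_or_ne x y with h | h
    · rw [h]
    · rw [seqDist_of_ne α h, seqDist_of_ne α h.symm, seqV_comm]
  dist_triangle x y z := by
    show seqDist α x z ≤ seqDist α x y + seqDist α y z
    rcases eq_or_ne x z with hxz | hxz
    · rw [hxz, seqDist_self]
      exact add_nonneg (seqDist_nonneg hα.1 _ _) (seqDist_nonneg hα.1 _ _)
    rcases eq_or_ne x y with hxy | hxy
    · subst hxy
      rw [seqDist_self, zero_add]
    rcases eq_or_ne y z with hyz | hyz
    · subst hyz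
      rw [seqDist_self, add_zero]
    rw [seqDist_of_ne α hxz, seqDist_of_ne α hxy, seqDist_of_ne α hyz]
    have h1 : α (seqV x z) ≤ α (min (seqV x y) (seqV y z)) :=
      hα.2.1 _ _ (min_seqV_le hxz)
    rcases min_cases (seqV x y) (seqV y z) with ⟨he, _⟩ | ⟨he, _⟩
    · rw [he] at h1
      exact h1.trans (le_add_of_nonneg_right (hα.1 _).le)
    · rw [he] at h1
      exact h1.trans (le_add_of_nonneg_left (hα.1 _).le)
  eq_of_dist_eq_zero := by
    intro x y h
    by_contra hne
    have h' : seqDist α x y = 0 := h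
    rw [seqDist_of_ne α hne] at h'
    exact absurd h' (ne_of_gt (hα.1 _))

/-- The Assouad dimension of a metric space. -/
def assouadDim (X : Type*) [MetricSpace X] : ℝ≥0∞ :=
  sInf {d : ℝ≥0∞ | ∃ s : ℝ, 0 < s ∧ d = ENNReal.ofReal s ∧ ∃ K : ℝ, 0 < K ∧
    ∀ ε : ℝ, 0 < ε → ε < 2 → ∀ r : ℝ, 0 < r → ∀ x : X,
      ∃ c : Finset X, (c.card : ℝ) ≤ K * ε ^ (-s) ∧
        Metric.closedBall x r ⊆ ⋃ y ∈ c, Metric.closedBall y (ε * r)}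

/-- The Hausdorff dimension of (the whole of) a metric space. -/
def hausdorffDim (X : Type*) [MetricSpace X] : ℝ≥0∞ := dimH (Set.univ : Set X)

/-- The topology induced by a metric. -/
def metricTopology {X : Type*} (m : MetricSpace X) : TopologicalSpace X :=
  m.toPseudoMetricSpace.toUniformSpace.toTopologicalSpace

/-- `f : X → Y` is quasi-symmetric: for some self-homeomorphism `η` of `[0,∞)`,
`d(f x, f y)/d(f x, f z) ≤ η (d(x,y)/d(x,z))` for all distinct `x, y, z`. -/
def IsQuasiSymmetric {X Y : Type*} [MetricSpace X] [MetricSpace Y] (f : X → Y) : Prop :=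
  ∃ η : Homeomorph (Set.Ici (0 : ℝ)) (Set.Ici (0 : ℝ)),
    ∀ x y z : X, x ≠ y → x ≠ z → y ≠ z →
      dist (f x) (f y) / dist (f x) (f z) ≤
        (η ⟨dist x y / dist x z, div_nonneg dist_nonneg dist_nonneg⟩ : ℝ)

/-- Two metric spaces (given by explicit metric structures) are quasi-symmetrically
equivalent if there is a quasi-symmetric homeomorphism between them. -/
def QSEquiv (X Y : Type*) (mX : MetricSpace X) (mY : MetricSpace Y) : Prop :=
  ∃ f : @Homeomorph X Y (metricTopology mX) (metricTopology mY),
    @IsQuasiSymmetric X Y mX mY f.toEquiv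


/-- The `ℓ^∞`-product metric (the sup metric) on `X × Y`. -/
def prodMetric {X Y : Type*} (mX : MetricSpace X) (mY : MetricSpace Y) :
    MetricSpace (X × Y) :=
  letI := mX; letI := mY; Prod.metricSpaceMax

namespace St18

/-! ### The block / exponent combinatorics -/

def bS : ℕ → ℕ
  | 0 => 0
  | k+1 => bS k + k + 1

def blk : ℕ → ℕ × ℕ
  | 0 => (0, 0)
  | n+1 => if (blk n).2 = (blk n).1 then ((blk n).1 + 1, 0) else ((blk n).1, (blk n).2 + 1)

def f (n : ℕ) : ℕ := ((blk n).1 + 1) ^ 4 + (blk n).2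

lemma blk_snd_le (n : ℕ) : (blk n).2 ≤ (blk n).1 := by
  induction n with
  | zero => simp [blk]
  | succ n ih =>
    rw [blk]
    split
    · simp
    · simp only
      omega

lemma blk_add (k : ℕ) (h0 : blk (bS k) = (k, 0)) : ∀ j, j ≤ k → blk (bS k + j) = (k, j) := by
  intro j
  induction j with
  | zero => simpa using h0
  | succ j ihj =>
    intro hj
    have : bS k + (j+1) = (bS k + j) + 1 := by ring
    rw [this, blk, ihj (by omega)]
    have : j ≠ k := by omega
    simp [this]

lemma blk_bS : ∀ k, blk (bS k) = (k, 0) := by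
  intro k
  induction k with
  | zero => simp [bS, blk]
  | succ k ih =>
    have h2 : bS (k+1) = (bS k + k) + 1 := by rw [bS]
    rw [h2, blk, blk_add k ih k le_rfl]
    simp

lemma blk_eq (k j : ℕ) (hj : j ≤ k) : blk (bS k + j) = (k, j) := blk_add k (blk_bS k) j hj

lemma f_succ_ge (n : ℕ) : f n + 1 ≤ f (n + 1) := by
  rcases blk_snd_le n |>.lt_or_eq with h | h
  · have : blk (n+1) = ((blk n).1, (blk n).2 + 1) := by rw [blk]; simp [Nat.ne_of_lt h]
    simp only [f, this]
    omega
  · have : blk (n+1) = ((blk n).1 + 1, 0) := by rw [blk]; simp [h]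
    simp only [f, this]
    have h2 := blk_snd_le n
    set a := (blk n).1
    have : (a + 1)^4 + a + 1 ≤ (a+2)^4 := by
      nlinarith [sq_nonneg a, sq_nonneg (a+1), pow_pos (Nat.succ_pos a) 2]
    calc (a+1)^4 + (blk n).2 + 1 ≤ (a+1)^4 + a + 1 := by omega
      _ ≤ (a+2)^4 := this
      _ = (a + 1 + 1)^4 + 0 := by ring

lemma f_strictMono : StrictMono f := strictMono_nat_of_lt_succ fun n => f_succ_ge n

lemma f_mono : Monotone f := f_strictMono.monotone

lemma f_add_le (m n : ℕ) (h : m ≤ n) : f m + (n - m) ≤ f n := by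
  induction n with
  | zero => interval_cases m; simp
  | succ n ih =>
    rcases Nat.lt_or_ge m (n+1) with h' | h'
    · have := f_succ_ge n
      have := ih (by omega)
      omega
    · have : m = n + 1 := by omega
      subst this; simp

lemma f_bS_add (k j : ℕ) (hj : j ≤ k) : f (bS k + j) = (k+1)^4 + j := by
  rw [f, blk_eq k j hj]

lemma f_bS (k : ℕ) : f (bS k) = (k+1)^4 := by
  have := f_bS_add k 0 (Nat.zero_le k)
  simpa using this

lemma bS_le (k : ℕ) : bS k ≤ (k+1)^2 := by
  induction k with
  | zero => simp [bS]
  | succ k ih => rw [bS]; nlinarith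

lemma le_bS (k : ℕ) : k ≤ bS k := by
  induction k with
  | zero => simp [bS]
  | succ k ih => rw [bS]; omega

lemma le_f (n : ℕ) : n ≤ f n := f_strictMono.le_apply

/-! ### The sequence θ -/

def th (n : ℕ) : ℝ := (2⁻¹ : ℝ) ^ f n

lemma th_pos (n : ℕ) : 0 < th n := pow_pos (by norm_num) _

lemma th_anti {m n : ℕ} (h : m ≤ n) : th n ≤ th m :=
  pow_le_pow_of_le_one (by norm_num) (by norm_num) (f_mono h)

lemma th_strict_anti {m n : ℕ} (h : m < n) : th n < th m :=
  pow_lt_pow_right_of_lt_one₀ (by norm_num) (by norm_num) (f_strictMono h)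

lemma th_tendsto : Filter.Tendsto th Filter.atTop (nhds 0) := by
  apply squeeze_zero (fun n => (th_pos n).le) (fun n => ?_)
    (tendsto_pow_atTop_nhds_zero_of_lt_one (by norm_num) (by norm_num) :
      Filter.Tendsto (fun n : ℕ => (2⁻¹ : ℝ) ^ n) Filter.atTop (nhds 0))
  exact pow_le_pow_of_le_one (by norm_num) (by norm_num) (le_f n)

lemma th_shrinking : IsShrinking th := ⟨th_pos, fun m n h => th_anti h, th_tendsto⟩

lemma th_ratio {n m : ℕ} (h : n ≤ m) : th m ≤ th n * (2⁻¹ : ℝ) ^ (m - n) := by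
  rw [th, th, ← pow_add]
  exact pow_le_pow_of_le_one (by norm_num) (by norm_num) (f_add_le n m h)

lemma th_block (k j : ℕ) (hj : j ≤ k) : th (bS k + j) = th (bS k) * (2⁻¹ : ℝ) ^ j := by
  rw [th, th, ← pow_add, f_bS_add k j hj, f_bS]

lemma th_exists_le {r : ℝ} (hr : 0 < r) : ∃ n, th n ≤ r := by
  have := (tendsto_order.1 th_tendsto).2 r hr
  rcases this.exists with ⟨n, hn⟩
  exact ⟨n, hn.le⟩

/-! ### Metric lemmas -/

lemma seqDist_le_of_agree {θ : ℕ → ℝ} (hθ : IsShrinking θ) {x y : ℕ → Bool} {n : ℕ}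
    (h : ∀ i < n, x i = y i) : seqDist θ x y ≤ θ n := by
  rcases eq_or_ne x y with rfl | hne
  · rw [seqDist_self]; exact (hθ.1 n).le
  · rw [seqDist_of_ne θ hne]
    apply hθ.2.1
    by_contra hlt
    push_neg at hlt
    have hne' : {i | x i ≠ y i}.Nonempty := by
      rcases Function.ne_iff.mp hne with ⟨i, hi⟩
      exact ⟨i, hi⟩
    exact (Nat.sInf_mem hne') (h _ hlt)

lemma agree_of_seqDist_lt {θ : ℕ → ℝ} (hθ : IsShrinking θ) {x y : ℕ → Bool} {m : ℕ}
    (h : seqDist θ x y < θ m) : ∀ i ≤ m, x i = y i := by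
  intro i hi
  rcases eq_or_ne x y with rfl | hne
  · rfl
  · rw [seqDist_of_ne θ hne] at h
    by_contra hne2
    have h1 : seqV x y ≤ i := Nat.sInf_le hne2
    have := hθ.2.1 _ _ (h1.trans hi)
    linarith

lemma dimH_univ_zero_of_covers {X : Type*} [MetricSpace X] {ι : ℕ → Type*}
    [∀ k, Fintype (ι k)] (t : ∀ k, ι k → Set X) (r : ℕ → ℝ)
    (hrt : Filter.Tendsto r Filter.atTop (nhds 0))
    (hdiam : ∀ k i, EMetric.diam (t k i) ≤ ENNReal.ofReal (r k))
    (hcov : ∀ k, (Set.univ : Set X) ⊆ ⋃ i, t k i)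
    (hcount : ∀ d : ℝ, 0 < d →
      Filter.Tendsto (fun k => (Fintype.card (ι k) : ℝ) * r k ^ d) Filter.atTop (nhds 0)) :
    dimH (Set.univ : Set X) = 0 := by
  borelize X
  refine le_antisymm ?_ zero_le
  refine ENNReal.le_of_forall_pos_le_add fun ε hε _ => ?_
  rw [zero_add]
  refine dimH_le_of_hausdorffMeasure_ne_top (d := ε) ?_
  have hd : (0:ℝ) < (ε:ℝ) := hε
  set d : ℝ := (ε:ℝ) with hdd
  have hr : Filter.Tendsto (fun k => ENNReal.ofReal (r k)) Filter.atTop (nhds 0) := by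
    rw [← ENNReal.ofReal_zero]
    exact (ENNReal.continuous_ofReal.tendsto 0).comp hrt
  have key := MeasureTheory.Measure.hausdorffMeasure_le_liminf_sum d (Set.univ : Set X)
    (fun k => ENNReal.ofReal (r k)) hr t
    (Filter.Eventually.of_forall fun k => hdiam k) (Filter.Eventually.of_forall hcov)
  have hsum : ∀ k : ℕ, (∑ i : ι k, EMetric.diam (t k i) ^ d)
      ≤ ENNReal.ofReal ((Fintype.card (ι k) : ℝ) * r k ^ d) := by
    intro k
    rcases le_or_gt (r k) 0 with hrk | hrk
    · -- r k ≤ 0 : each diam ≤ ofReal (r k) = 0, so diam = 0, diam ^ d = 0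
      have : ∀ i : ι k, EMetric.diam (t k i) ^ d = 0 := by
        intro i
        have h0 : EMetric.diam (t k i) = 0 := le_antisymm (by
          simpa [ENNReal.ofReal_eq_zero.2 hrk] using hdiam k i) zero_le
        rw [h0]
        exact ENNReal.zero_rpow_of_pos hd
      simp [this]
    · have hterm : ∀ i : ι k,
          EMetric.diam (t k i) ^ d ≤ ENNReal.ofReal (r k ^ d) := by
        intro i
        rw [← ENNReal.ofReal_rpow_of_pos hrk]
        exact ENNReal.rpow_le_rpow (hdiam k i) hd.le
      calc (∑ i : ι k, EMetric.diam (t k i) ^ d)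
          ≤ ∑ _i : ι k, ENNReal.ofReal (r k ^ d) :=
            Finset.sum_le_sum fun i _ => hterm i
        _ = (Fintype.card (ι k) : ℕ) * ENNReal.ofReal (r k ^ d) := by
            rw [Finset.sum_const, Finset.card_univ]
            simp
        _ = ENNReal.ofReal ((Fintype.card (ι k) : ℝ) * r k ^ d) := by
            rw [ENNReal.ofReal_mul (by positivity)]
            congr 1
            rw [← ENNReal.ofReal_natCast]
  have hlim : Filter.liminf (fun k => (∑ i : ι k, EMetric.diam (t k i) ^ d))
      Filter.atTop = 0 := by
    have hv' : Filter.Tendsto (fun k => ENNReal.ofReal ((Fintype.card (ι k) : ℝ) * r k ^ d))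
        Filter.atTop (nhds 0) := by
      rw [← ENNReal.ofReal_zero]
      exact (ENNReal.continuous_ofReal.tendsto 0).comp (hcount d hd)
    refine le_antisymm ?_ zero_le
    calc Filter.liminf (fun k => (∑ i : ι k, EMetric.diam (t k i) ^ d)) Filter.atTop
        ≤ Filter.liminf (fun k => ENNReal.ofReal ((Fintype.card (ι k) : ℝ) * r k ^ d))
          Filter.atTop := Filter.liminf_le_liminf (Filter.Eventually.of_forall hsum)
      _ = 0 := hv'.liminf_eq
  rw [show Filter.liminf (fun n => ∑ i, Metric.ediam (t n i) ^ d) Filter.atTop = 0 from hlim] at key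
  simp only [le_zero_iff] at key
  rw [key]
  exact ENNReal.zero_ne_top

theorem haus_dim : @hausdorffDim (ℕ → Bool) (seqMetricSpace th th_shrinking) = 0 := by
  letI : MetricSpace (ℕ → Bool) := seqMetricSpace th th_shrinking
  show dimH (Set.univ : Set (ℕ → Bool)) = 0
  refine dimH_univ_zero_of_covers
    (fun k (σ : Fin (bS k) → Bool) => {y : ℕ → Bool | ∀ i : Fin (bS k), y i = σ i})
    (fun k => th (bS k)) ?_ ?_ ?_ ?_
  · exact th_tendsto.comp (Filter.tendsto_atTop_mono le_bS Filter.tendsto_id)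
  · intro k σ
    apply EMetric.diam_le
    intro x hx y hy
    rw [edist_dist]
    apply ENNReal.ofReal_le_ofReal
    show seqDist th x y ≤ th (bS k)
    apply seqDist_le_of_agree th_shrinking
    intro i hi
    rw [hx ⟨i, hi⟩, hy ⟨i, hi⟩]
  · intro k y _
    exact Set.mem_iUnion.2 ⟨fun i => y i, fun i => rfl⟩
  · intro d hd
    have hcard : ∀ k, (Fintype.card (Fin (bS k) → Bool) : ℝ) = (2:ℝ) ^ (bS k) := by
      intro k
      rw [Fintype.card_fun]
      push_cast
      simp
    apply squeeze_zero' (Filter.Eventually.of_forall fun k =>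
        mul_nonneg (Nat.cast_nonneg _) (Real.rpow_nonneg (th_pos _).le _))
      ?_ (tendsto_pow_atTop_nhds_zero_of_lt_one (by norm_num) (by norm_num) :
        Filter.Tendsto (fun k : ℕ => (2⁻¹:ℝ) ^ k) Filter.atTop (nhds 0))
    rw [Filter.eventually_atTop]
    refine ⟨⌈2/d⌉₊, fun k hk => ?_⟩
    have hk2 : (2:ℝ)/d ≤ (k:ℝ) := (Nat.ceil_le.mp hk)
    have hkd : 2 ≤ d * (k:ℝ) := by
      rw [div_le_iff₀ hd] at hk2
      nlinarith
    have hBk : (bS k : ℝ) ≤ ((k:ℝ)+1)^2 := by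
      have := bS_le k
      calc (bS k : ℝ) ≤ ((k+1)^2 : ℕ) := by exact_mod_cast this
        _ = ((k:ℝ)+1)^2 := by push_cast; ring
    have hexp : ((bS k : ℝ) + k) ≤ d * ((k:ℝ)+1)^4 := by
      have h2 : (2:ℝ) ≤ d * ((k:ℝ)+1)^2 := by nlinarith [sq_nonneg ((k:ℝ)+1), hd.le]
      have hkk : (k:ℝ) ≤ ((k:ℝ)+1)^2 := by nlinarith [sq_nonneg (k:ℝ)]
      nlinarith [sq_nonneg ((k:ℝ)+1), sq_nonneg (((k:ℝ)+1)^2)]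
    have hth : th (bS k) = (2⁻¹:ℝ) ^ ((k+1)^4 : ℕ) := by rw [th, f_bS]
    have h4 : th (bS k) ^ d ≤ (2⁻¹:ℝ) ^ ((bS k + k : ℕ) : ℝ) := by
      rw [hth, ← Real.rpow_natCast (2⁻¹:ℝ) ((k+1)^4), ← Real.rpow_mul (by norm_num)]
      apply Real.rpow_le_rpow_of_exponent_ge (by norm_num) (by norm_num)
      push_cast
      calc ((bS k : ℝ) + k) ≤ d * ((k:ℝ)+1)^4 := hexp
        _ = ((k:ℝ)+1)^4 * d := by ring
    calc (Fintype.card (Fin (bS k) → Bool) : ℝ) * th (bS k) ^ d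
        ≤ (2:ℝ) ^ (bS k) * (2⁻¹:ℝ) ^ ((bS k + k : ℕ) : ℝ) := by
          rw [hcard]
          exact mul_le_mul_of_nonneg_left h4 (by positivity)
      _ = (2⁻¹:ℝ) ^ k := by
          rw [Real.rpow_natCast, pow_add, ← mul_assoc, ← mul_pow]
          norm_num

theorem asd_dim : @assouadDim (ℕ → Bool) (seqMetricSpace th th_shrinking) = 1 := by
  letI : MetricSpace (ℕ → Bool) := seqMetricSpace th th_shrinking
  classical
  have hdist : ∀ x y : ℕ → Bool, dist x y = seqDist th x y := fun x y => rfl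
  show sInf _ = 1
  apply le_antisymm
  · -- upper bound: membership with s = 1, K = 2
    apply sInf_le
    refine ⟨1, one_pos, ENNReal.ofReal_one.symm, 2, two_pos, ?_⟩
    intro ε hε hε2 r hr x
    have hεr : 0 < ε * r := mul_pos hε hr
    have hεinv : (ε : ℝ) ^ (-(1:ℝ)) = ε⁻¹ := Real.rpow_neg_one ε
    obtain ⟨n, hn, hnmin⟩ : ∃ n, th n ≤ r ∧ ∀ i < n, r < th i := by
      have hex := th_exists_le hr
      exact ⟨Nat.find hex, Nat.find_spec hex, fun i hi => lt_of_not_ge (Nat.find_min hex hi)⟩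
    obtain ⟨m, hm, hmmin⟩ : ∃ m, th m ≤ ε * r ∧ ∀ i < m, ε * r < th i := by
      have hex := th_exists_le hεr
      exact ⟨Nat.find hex, Nat.find_spec hex, fun i hi => lt_of_not_ge (Nat.find_min hex hi)⟩
    -- the covering centers
    set ext : (Fin (m - n) → Bool) → (ℕ → Bool) := fun σ i =>
      if i < n then x i else if h2 : i - n < m - n then σ ⟨i - n, h2⟩ else false with hext
    refine ⟨Finset.image ext Finset.univ, ?_, ?_⟩
    · -- cardinality bound
      have hcard : (Finset.image ext Finset.univ).card ≤ 2 ^ (m - n) := by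
        calc (Finset.image ext Finset.univ).card ≤ (Finset.univ : Finset (Fin (m-n) → Bool)).card :=
              Finset.card_image_le
          _ = 2 ^ (m - n) := by rw [Finset.card_univ, Fintype.card_fun]; simp
      have hpow : ((2:ℝ)) ^ (m - n) ≤ 2 * ε⁻¹ := by
        rcases le_or_gt m n with hmn | hmn
        · have : m - n = 0 := Nat.sub_eq_zero_of_le hmn
          rw [this, pow_zero]
          have h1 : ε * ε⁻¹ = 1 := mul_inv_cancel₀ hε.ne'
          have h2 : 0 < ε⁻¹ := inv_pos.2 hε
          nlinarith
        · -- n < m, so n ≤ m - 1 < m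
          have hm1 : m - 1 < m := by omega
          have hlt : ε * r < th (m - 1) := hmmin _ hm1
          have hth : th (m-1) ≤ th n * (2⁻¹:ℝ) ^ (m - 1 - n) := th_ratio (by omega)
          have hthr : th n ≤ r := hn
          have hε' : ε < (2⁻¹:ℝ) ^ (m - 1 - n) := by
            have h1 : ε * r < r * (2⁻¹:ℝ) ^ (m - 1 - n) := by
              calc ε * r < th (m-1) := hlt
                _ ≤ th n * (2⁻¹:ℝ) ^ (m - 1 - n) := hth
                _ ≤ r * (2⁻¹:ℝ) ^ (m - 1 - n) := by
                    apply mul_le_mul_of_nonneg_right hthr (by positivity)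
            have := (mul_lt_mul_iff_left₀ hr).mp (by linarith [h1] : ε * r < (2⁻¹:ℝ) ^ (m-1-n) * r)
            exact this
          have hinv : ((2:ℝ)) ^ (m - 1 - n) < ε⁻¹ := by
            have h3 : ε < ((2:ℝ) ^ (m-1-n))⁻¹ := by rw [← inv_pow]; exact hε'
            exact (lt_inv_comm₀ hε (by positivity)).1 h3
          have hmn' : m - n = (m - 1 - n) + 1 := by omega
          rw [hmn', pow_succ]
          linarith [hinv]
      calc ((Finset.image ext Finset.univ).card : ℝ) ≤ ((2:ℕ) ^ (m - n) : ℕ) := by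
            exact_mod_cast hcard
        _ = (2:ℝ) ^ (m - n) := by push_cast; ring
        _ ≤ 2 * ε⁻¹ := hpow
        _ = 2 * ε ^ (-(1:ℝ)) := by rw [hεinv]
    · -- covering
      intro y hy
      have hagree : ∀ i < n, x i = y i := by
        intro i hi
        have hsd : seqDist th x y < th i := by
          have : dist y x ≤ r := Metric.mem_closedBall.mp hy
          rw [hdist] at this
          calc seqDist th x y = seqDist th y x := by
                rcases eq_or_ne y x with rfl | hne
                · rfl
                · rw [seqDist_of_ne th hne, seqDist_of_ne th (Ne.symm hne), seqV_comm]
            _ ≤ r := this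
            _ < th i := hnmin i hi
        exact agree_of_seqDist_lt th_shrinking hsd i le_rfl
      set σy : Fin (m - n) → Bool := fun j => y (n + j) with hσy
      refine Set.mem_iUnion₂.2 ⟨ext σy, Finset.mem_image.2 ⟨σy, Finset.mem_univ _, rfl⟩, ?_⟩
      rw [Metric.mem_closedBall, hdist]
      have : ∀ i < m, y i = ext σy i := by
        intro i hi
        by_cases hin : i < n
        · simp only [hext, if_pos hin]
          exact (hagree i hin).symm
        · push_neg at hin
          have h2 : i - n < m - n := by omega
          simp only [hext, if_neg (not_lt.mpr hin), dif_pos h2]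
          simp only [hσy]
          congr 1
          omega
      calc seqDist th y (ext σy) ≤ th m := seqDist_le_of_agree th_shrinking this
        _ ≤ ε * r := hm
  · -- lower bound: every member is ≥ 1
    apply le_sInf
    rintro e ⟨s, hs, rfl, K, hK, hcov⟩
    rw [show (1:ℝ≥0∞) = ENNReal.ofReal 1 from ENNReal.ofReal_one.symm]
    apply ENNReal.ofReal_le_ofReal
    by_contra hs1
    push_neg at hs1
    -- key claim: ∀ k ≥ 1, 2^k ≤ K * 2^(k*s)
    have claim : ∀ k : ℕ, 1 ≤ k → (2:ℝ) ^ k ≤ K * (2:ℝ) ^ ((k:ℝ) * s) := by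
      intro k hk1
      set ε : ℝ := (2⁻¹:ℝ) ^ k with hεdef
      have hε : 0 < ε := by positivity
      have hε2 : ε < 2 := by
        calc ε ≤ 1 := by
              apply pow_le_one₀ (by norm_num) (by norm_num)
          _ < 2 := one_lt_two
      set r : ℝ := th (bS k) with hrdef
      have hr : 0 < r := th_pos _
      obtain ⟨c, hc, hcov'⟩ := hcov ε hε hε2 r hr (fun _ => false)
      have hεr : ε * r = th (bS k + k) := by
        rw [th_block k k le_rfl, hεdef, hrdef]; ring
      have hεrlt : ε * r < th (bS k + (k - 1)) := by
        rw [hεr]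
        apply th_strict_anti
        omega
      -- injection from Fin k → Bool into c
      have hiy : ∀ σ : Fin k → Bool, ∃ y ∈ c, ∀ j : Fin k, y (bS k + (j:ℕ)) = σ j := by
        intro σ
        set z : ℕ → Bool := fun i =>
          if h : bS k ≤ i ∧ i - bS k < k then σ ⟨i - bS k, h.2⟩ else false with hz
        have hzball : z ∈ Metric.closedBall (fun _ => false) r := by
          rw [Metric.mem_closedBall, hdist]
          apply seqDist_le_of_agree th_shrinking
          intro i hi
          simp only [hz]
          rw [dif_neg]
          omega
        obtain ⟨y, hyc, hyz⟩ := Set.mem_iUnion₂.1 (hcov' hzball)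
        refine ⟨y, hyc, fun j => ?_⟩
        have hd2 : seqDist th z y < th (bS k + (k-1)) := by
          have : dist z y ≤ ε * r := Metric.mem_closedBall.mp hyz
          rw [hdist] at this
          linarith
        have := agree_of_seqDist_lt th_shrinking hd2 (bS k + (j:ℕ)) (by omega)
        rw [← this]
        simp only [hz]
        rw [dif_pos ⟨by omega, by simpa using j.2⟩]
        exact congrArg σ (Fin.ext (show bS k + (j:ℕ) - bS k = (j:ℕ) by omega))
      choose F hFc hFσ using hiy
      have hinj : Set.InjOn F (Finset.univ : Finset (Fin k → Bool)) := by
        intro σ1 _ σ2 _ hFeq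
        funext j
        rw [← hFσ σ1 j, ← hFσ σ2 j, hFeq]
      have hcard : 2 ^ k ≤ c.card := by
        calc 2 ^ k = (Finset.univ : Finset (Fin k → Bool)).card := by
              rw [Finset.card_univ, Fintype.card_fun]; simp
          _ ≤ c.card := Finset.card_le_card_of_injOn F (fun σ _ => hFc σ) hinj
      have h2k : ((2:ℝ)) ^ k ≤ K * ε ^ (-s) := by
        calc ((2:ℝ)) ^ k ≤ (c.card : ℝ) := by exact_mod_cast hcard
          _ ≤ K * ε ^ (-s) := hc
      have hεs : ε ^ (-s) = (2:ℝ) ^ ((k:ℝ) * s) := by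
        rw [hεdef]
        rw [show ((2⁻¹:ℝ)) ^ k = (2:ℝ) ^ (-(k:ℝ)) by
          rw [Real.rpow_neg (by norm_num), Real.rpow_natCast, inv_pow]]
        rw [← Real.rpow_mul (by norm_num)]
        ring_nf
      rw [hεs] at h2k
      exact h2k
    -- derive a contradiction
    set a : ℝ := (2:ℝ) ^ (1 - s) with hadef
    have ha1 : 1 < a := by
      rw [hadef]
      exact (Real.one_lt_rpow_iff_of_pos (by norm_num)).2 (Or.inl ⟨by norm_num, by linarith⟩)
    obtain ⟨k0, hk0⟩ := pow_unbounded_of_one_lt K ha1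
    set k := max k0 1 with hkdef
    have hak : a ^ k0 ≤ a ^ k := pow_le_pow_right₀ ha1.le (le_max_left _ _)
    have hKk : K < a ^ k := lt_of_lt_of_le hk0 hak
    have h2k := claim k (le_max_right _ _)
    have hak2 : a ^ k = (2:ℝ) ^ ((k:ℝ)) / (2:ℝ) ^ ((k:ℝ) * s) := by
      rw [hadef, ← Real.rpow_natCast ((2:ℝ) ^ (1 - s)) k, ← Real.rpow_mul (by norm_num)]
      rw [← Real.rpow_sub (by norm_num)]
      congr 1
      ring
    have hpow2 : (0:ℝ) < (2:ℝ) ^ ((k:ℝ) * s) := Real.rpow_pos_of_pos (by norm_num) _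
    have : a ^ k ≤ K := by
      rw [hak2, div_le_iff₀ hpow2]
      calc (2:ℝ) ^ ((k:ℝ)) = (2:ℝ) ^ k := by rw [Real.rpow_natCast]
        _ ≤ K * (2:ℝ) ^ ((k:ℝ) * s) := h2k
    linarith

end St18

theorem statement_18 :
    ∃ (θ : ℕ → ℝ) (hθ : IsShrinking θ),
      @hausdorffDim (ℕ → Bool) (seqMetricSpace θ hθ) = 0 ∧
      @assouadDim (ℕ → Bool) (seqMetricSpace θ hθ) = 1 :=
  ⟨St18.th, St18.th_shrinking, St18.haus_dim, St18.asd_dim⟩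

end
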